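/- Gentle Operator Lemma for ensembles: Let {p_X(x), ρ_x}_{x∈𝒳} be a finite ensemble of density operators on a finite-dimensional Hilbert space with expected density operator ρ = Σ_x p_X(x)ρ_x, and let Λ be an operator with 0 ≤ Λ ≤ I such that Tr{Λρ} ≥ 1 − ε for some ε ≥ 0. Then the expected trace distance between √Λ ρ_x √Λ and ρ_x satisfies Σ_x p_X(x) ‖ √Λ ρ_x √Λ − ρ_x ‖₁ ≤ 2√ε. -/

import Mathlib

open scoped BigOperators ComplexOrder

noncomputable section

namespace QIC

/-- von Neumann entropy in bits, via eigenvalues (convention `0·log 0 = 0`). -/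
def vnEntropy {m : Type*} [Fintype m] [DecidableEq m] (ρ : Matrix m m ℂ) : ℝ :=
  if h : ρ.IsHermitian then -∑ i, h.eigenvalues i * Real.logb 2 (h.eigenvalues i) else 0

/-- min-entropy in bits: `−log₂` of the largest eigenvalue. -/
def minEntropy {m : Type*} [Fintype m] [DecidableEq m] (ρ : Matrix m m ℂ) : ℝ :=
  if h : ρ.IsHermitian then -Real.logb 2 (⨆ i, h.eigenvalues i) else 0

/-- A density operator: positive semidefinite with unit trace. -/
def IsDensity {m : Type*} [Fintype m] [DecidableEq m] (ρ : Matrix m m ℂ) : Prop :=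
  ρ.PosSemidef ∧ ρ.trace = 1

/-- A POVM: a finite family of positive semidefinite operators summing to the identity. -/
def IsPOVM {ι m : Type*} [Fintype ι] [Fintype m] [DecidableEq m]
    (Λ : ι → Matrix m m ℂ) : Prop :=
  (∀ i, (Λ i).PosSemidef) ∧ ∑ i, Λ i = 1

/-- A probability distribution on a finite alphabet. -/
def IsProbDist {X : Type*} [Fintype X] (p : X → ℝ) : Prop :=
  (∀ x, 0 ≤ p x) ∧ ∑ x, p x = 1

/-- `n`-fold tensor product of matrices on `Fin d`. -/
def tensorPow {d n : ℕ} (f : Fin n → Matrix (Fin d) (Fin d) ℂ) :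
    Matrix (Fin n → Fin d) (Fin n → Fin d) ℂ :=
  Matrix.of fun i j => ∏ k, f k (i k) (j k)

/-- Square root of a positive semidefinite matrix (the definition of the former
`Matrix.PosSemidef.sqrt`, removed from Mathlib). -/
def PosSemidef.sqrt {m : Type*} [Fintype m] [DecidableEq m] {X : Matrix m m ℂ}
    (hX : X.PosSemidef) : Matrix m m ℂ :=
  (hX.1.eigenvectorUnitary : Matrix m m ℂ) * Matrix.diagonal ((↑) ∘ Real.sqrt ∘ hX.1.eigenvalues) *
    (star hX.1.eigenvectorUnitary : Matrix m m ℂ)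

/-- Positive semidefinite square root (zero on non-PSD matrices). -/
def msqrt {m : Type*} [Fintype m] [DecidableEq m] (X : Matrix m m ℂ) : Matrix m m ℂ :=
  open Classical in if h : X.PosSemidef then PosSemidef.sqrt h else 0

/-- Trace norm `‖X‖₁ = Tr √(XᴴX)`. -/
def traceNorm {m : Type*} [Fintype m] [DecidableEq m] (X : Matrix m m ℂ) : ℝ :=
  (PosSemidef.sqrt (Matrix.posSemidef_conjTranspose_mul_self X)).trace.re

/-- Loewner order: `A ≤ B` iff `B − A` is positive semidefinite. -/
def loewnerLE {m : Type*} [Fintype m] [DecidableEq m] (A B : Matrix m m ℂ) : Prop :=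
  (B - A).PosSemidef



section Helpers
set_option linter.unusedSectionVars false
open Matrix
variable {m : Type*} [Fintype m] [DecidableEq m]

section SqrtCompat
open scoped MatrixOrder

lemma spectral_theorem' {A : Matrix m m ℂ} (hA : A.IsHermitian) :
    A = (hA.eigenvectorUnitary : Matrix m m ℂ) * diagonal (RCLike.ofReal ∘ hA.eigenvalues)
      * star (hA.eigenvectorUnitary : Matrix m m ℂ) := by
  conv_lhs => rw [hA.spectral_theorem]
  rw [Unitary.conjStarAlgAut_apply]

lemma sqrt_eq_cfcSqrt {A : Matrix m m ℂ} (hA : A.PosSemidef) :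
    QIC.PosSemidef.sqrt hA = CFC.sqrt A := by
  rw [CFC.sqrt_eq_cfc, cfc_nnreal_eq_real _ A hA.nonneg, hA.1.cfc_eq, IsHermitian.cfc,
    Unitary.conjStarAlgAut_apply, QIC.PosSemidef.sqrt]
  congr 3
  funext i
  simp [Real.coe_sqrt, hA.eigenvalues_nonneg i]

abbrev _root_.Matrix.PosSemidef.sqrt {A : Matrix m m ℂ} (hA : A.PosSemidef) : Matrix m m ℂ :=
  QIC.PosSemidef.sqrt hA

lemma _root_.Matrix.PosSemidef.posSemidef_sqrt {A : Matrix m m ℂ} (hA : A.PosSemidef) :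
    hA.sqrt.PosSemidef := by
  show (QIC.PosSemidef.sqrt hA).PosSemidef
  rw [sqrt_eq_cfcSqrt]
  exact Matrix.nonneg_iff_posSemidef.mp (CFC.sqrt_nonneg A)

lemma _root_.Matrix.PosSemidef.sqrt_mul_self {A : Matrix m m ℂ} (hA : A.PosSemidef) :
    hA.sqrt * hA.sqrt = A := by
  show QIC.PosSemidef.sqrt hA * QIC.PosSemidef.sqrt hA = A
  rw [sqrt_eq_cfcSqrt]
  exact CFC.sqrt_mul_sqrt_self A hA.nonneg

lemma _root_.Matrix.PosSemidef.eq_sqrt_of_sq_eq {A : Matrix m m ℂ} (hA : A.PosSemidef)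
    {B : Matrix m m ℂ} (hB : B.PosSemidef) (h : A ^ 2 = B) : A = hB.sqrt := by
  show A = QIC.PosSemidef.sqrt hB
  rw [sqrt_eq_cfcSqrt, ← h, CFC.sqrt_sq A hA.nonneg]

end SqrtCompat

lemma cs_trace (A B : Matrix m m ℂ) :
    ‖(Aᴴ * B).trace‖ ≤
      Real.sqrt ((Aᴴ * A).trace.re) * Real.sqrt ((Bᴴ * B).trace.re) := by
  classical
  let f : Matrix m m ℂ → EuclideanSpace ℂ (m × m) := fun M =>
    (WithLp.equiv 2 _).symm (fun p : m × m => M p.1 p.2)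
  have hinner : ∀ M N : Matrix m m ℂ,
      (inner ℂ (f M) (f N) : ℂ) = (Mᴴ * N).trace := by
    intro M N
    simp only [Matrix.trace, Matrix.diag, Matrix.mul_apply, Matrix.conjTranspose_apply]
    rw [PiLp.inner_apply]
    rw [← Finset.sum_product']
    simp only [f, WithLp.equiv_symm_apply, PiLp.toLp_apply, RCLike.inner_apply, RCLike.star_def, mul_comm]
    rw [Finset.univ_product_univ]
    exact Fintype.sum_equiv (Equiv.prodComm m m) _ _ (fun p => rfl)
  have hnorm : ∀ M : Matrix m m ℂ, ‖f M‖ = Real.sqrt ((Mᴴ * M).trace.re) := by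
    intro M
    rw [@norm_eq_sqrt_re_inner ℂ]
    rw [show (RCLike.re (inner ℂ (f M) (f M) : ℂ) : ℝ) = ((Mᴴ * M).trace).re by rw [hinner]; rfl]
  calc ‖(Aᴴ * B).trace‖ = ‖(inner ℂ (f A) (f B) : ℂ)‖ := by
        rw [hinner]
    _ ≤ ‖f A‖ * ‖f B‖ := norm_inner_le_norm _ _
    _ = _ := by rw [hnorm, hnorm]

lemma trace_re_nonneg {A : Matrix m m ℂ} (hA : A.PosSemidef) : 0 ≤ A.trace.re := by
  rw [Matrix.trace, Complex.re_sum]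
  refine Finset.sum_nonneg fun i _ => ?_
  have := hA.re_dotProduct_nonneg (Pi.single i 1)
  simpa [Matrix.mulVec_single, dotProduct, Pi.single_apply, Finset.sum_ite_eq,
    Matrix.diag] using this

lemma trace_mul_re_nonneg {A ρ : Matrix m m ℂ} (hA : A.PosSemidef) (hρ : ρ.PosSemidef) :
    0 ≤ (A * ρ).trace.re := by
  have hs := hρ.posSemidef_sqrt
  have h1 : A * ρ = A * hρ.sqrt * hρ.sqrt := by
    rw [Matrix.mul_assoc, hρ.sqrt_mul_self]
  have h2 : (A * ρ).trace = (hρ.sqrt * A * hρ.sqrt).trace := by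
    rw [h1, Matrix.trace_mul_cycle]
  rw [h2]
  refine trace_re_nonneg ?_
  have := hA.conjTranspose_mul_mul_same hρ.sqrt
  rwa [hs.1.eq] at this

lemma trace_mul_mono {M N ρ : Matrix m m ℂ} (h : (N - M).PosSemidef) (hρ : ρ.PosSemidef) :
    (M * ρ).trace.re ≤ (N * ρ).trace.re := by
  have := trace_mul_re_nonneg h hρ
  rw [Matrix.sub_mul, Matrix.trace_sub, Complex.sub_re] at this
  linarith

lemma star_dot_self_eigenvector {Λ : Matrix m m ℂ} (hΛ : Λ.IsHermitian) (i : m) :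
    dotProduct (star ⇑(hΛ.eigenvectorBasis i)) ⇑(hΛ.eigenvectorBasis i) = 1 := by
  have h := hΛ.eigenvectorBasis.orthonormal.1 i
  have : (inner ℂ (hΛ.eigenvectorBasis i) (hΛ.eigenvectorBasis i) : ℂ) = 1 := by
    rw [inner_self_eq_norm_sq_to_K, h]; norm_num
  rwa [EuclideanSpace.inner_eq_star_dotProduct, dotProduct_comm] at this

lemma eigenvalues_le_one {Λ : Matrix m m ℂ} (hΛ : Λ.IsHermitian)
    (h1 : ((1 : Matrix m m ℂ) - Λ).PosSemidef) (i : m) : hΛ.eigenvalues i ≤ 1 := by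
  have h0 := h1.re_dotProduct_nonneg ⇑(hΛ.eigenvectorBasis i)
  rw [Matrix.sub_mulVec, Matrix.one_mulVec, dotProduct_sub,
    hΛ.mulVec_eigenvectorBasis, dotProduct_smul,
    star_dot_self_eigenvector hΛ i] at h0
  simp only [Complex.real_smul, mul_one, map_sub, Complex.one_re, Complex.ofReal_re] at h0
  simp at h0
  linarith

lemma sqrt_sub_self_psd {Λ : Matrix m m ℂ} (hΛ₀ : Λ.PosSemidef)
    (hΛ₁ : ((1 : Matrix m m ℂ) - Λ).PosSemidef) : (hΛ₀.sqrt - Λ).PosSemidef := by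
  set U : Matrix m m ℂ := (hΛ₀.1.eigenvectorUnitary : Matrix m m ℂ) with hU
  set lam := hΛ₀.1.eigenvalues with hlam
  have e2 : U * Matrix.diagonal (RCLike.ofReal ∘ Real.sqrt ∘ lam) * star U
      - U * Matrix.diagonal (RCLike.ofReal ∘ lam) * star U
      = U * Matrix.diagonal (RCLike.ofReal ∘ fun i => Real.sqrt (lam i) - lam i) * star U := by
    rw [← Matrix.sub_mul, ← Matrix.mul_sub, Matrix.diagonal_sub,
      show (fun i => (RCLike.ofReal ∘ Real.sqrt ∘ lam) i - (RCLike.ofReal ∘ lam) i)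
        = (RCLike.ofReal ∘ fun i => Real.sqrt (lam i) - lam i : m → ℂ) from
        funext fun i => by simp]
  have hdiff : hΛ₀.sqrt - Λ
      = U * Matrix.diagonal (RCLike.ofReal ∘ fun i => Real.sqrt (lam i) - lam i) * star U := by
    rw [← e2]
    congr 1
    exact spectral_theorem' hΛ₀.1
  rw [hdiff]
  have hd : (Matrix.diagonal (RCLike.ofReal ∘ fun i => Real.sqrt (lam i) - lam i)
      : Matrix m m ℂ).PosSemidef := by
    refine Matrix.posSemidef_diagonal_iff.mpr fun i => ?_
    rw [Function.comp_apply]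
    refine Complex.zero_le_real.mpr ?_
    have h0 := hΛ₀.eigenvalues_nonneg i
    have h1' := eigenvalues_le_one hΛ₀.1 hΛ₁ i
    show (0:ℝ) ≤ Real.sqrt (lam i) - lam i
    have hms := Real.mul_self_sqrt h0
    nlinarith [Real.sqrt_nonneg (lam i), Real.sqrt_le_one.mpr h1']
  rw [Matrix.star_eq_conjTranspose]
  exact hd.mul_mul_conjTranspose_same U

lemma exists_sign (X : Matrix m m ℂ) (hX : X.IsHermitian) :
    ∃ S : Matrix m m ℂ, Sᴴ = S ∧ S * S = 1 ∧
      traceNorm X = ((S * X).trace).re := by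
  set U : Matrix m m ℂ := (hX.eigenvectorUnitary : Matrix m m ℂ) with hUdef
  have hU1 : star U * U = 1 := Unitary.coe_star_mul_self hX.eigenvectorUnitary
  have hU2 : U * star U = 1 := Unitary.coe_mul_star_self hX.eigenvectorUnitary
  have key : ∀ a b : m → ℂ,
      (U * Matrix.diagonal a * star U) * (U * Matrix.diagonal b * star U)
        = U * Matrix.diagonal (a * b) * star U := by
    intro a b
    calc (U * Matrix.diagonal a * star U) * (U * Matrix.diagonal b * star U)
        = U * Matrix.diagonal a * (star U * U) * Matrix.diagonal b * star U := by
          simp only [Matrix.mul_assoc]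
      _ = U * (Matrix.diagonal a * Matrix.diagonal b) * star U := by
          rw [hU1]; simp only [Matrix.mul_one, Matrix.mul_assoc]
      _ = U * Matrix.diagonal (a * b) * star U := by rw [Matrix.diagonal_mul_diagonal]; rfl
  have keytr : ∀ a : m → ℂ, (U * Matrix.diagonal a * star U).trace = ∑ i, a i := by
    intro a
    rw [Matrix.trace_mul_cycle, hU1, Matrix.one_mul, Matrix.trace_diagonal]
  set lam := hX.eigenvalues with hlam
  set s : m → ℂ := fun i => if lam i < 0 then -1 else 1 with hs
  refine ⟨U * Matrix.diagonal s * star U, ?_, ?_, ?_⟩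
  · rw [Matrix.conjTranspose_mul, Matrix.conjTranspose_mul, ← Matrix.star_eq_conjTranspose U,
      ← Matrix.star_eq_conjTranspose (star U), star_star, Matrix.diagonal_conjTranspose]
    have : star s = s := by
      funext i; simp only [Pi.star_apply, hs]; split <;> simp
    rw [this, Matrix.mul_assoc]
  · rw [key]
    have : s * s = 1 := by
      funext i; simp only [Pi.mul_apply, Pi.one_apply, hs]; split <;> norm_num
    rw [this, show Matrix.diagonal (1 : m → ℂ) = 1 from Matrix.diagonal_one, Matrix.mul_one, hU2]
  · -- traceNorm X = re trace (S * X)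
    have hspec : X = U * Matrix.diagonal (RCLike.ofReal ∘ lam) * star U := spectral_theorem' hX
    have hSX : (U * Matrix.diagonal s * star U) * X
        = U * Matrix.diagonal (s * (RCLike.ofReal ∘ lam)) * star U := by
      conv_lhs => rw [hspec]
      exact key _ _
    set r : m → ℝ := fun i => |lam i| with hr
    have habs : s * (RCLike.ofReal ∘ lam) = (RCLike.ofReal ∘ r : m → ℂ) := by
      funext i
      simp only [hs, hr, Pi.mul_apply, Function.comp_apply]
      rcases lt_or_ge (lam i) 0 with h | h
      · rw [if_pos h, abs_of_neg h, RCLike.ofReal_neg]; ring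
      · rw [if_neg (not_lt.mpr h), abs_of_nonneg h, one_mul]
    -- the psd sqrt of XᴴX
    set C : Matrix m m ℂ := U * Matrix.diagonal (RCLike.ofReal ∘ r) * star U with hC
    have hCpsd : C.PosSemidef := by
      have hd : (Matrix.diagonal (RCLike.ofReal ∘ r : m → ℂ)).PosSemidef :=
        Matrix.posSemidef_diagonal_iff.mpr fun i => by
          exact Complex.zero_le_real.mpr (abs_nonneg (lam i))
      rw [hC, Matrix.star_eq_conjTranspose]
      exact hd.mul_mul_conjTranspose_same U
    have hCsq : C ^ 2 = Xᴴ * X := by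
      rw [hX.eq, pow_two, hC, key]
      conv_rhs => rw [hspec, key]
      have heq : (RCLike.ofReal ∘ r : m → ℂ) * (RCLike.ofReal ∘ r)
          = (RCLike.ofReal ∘ lam : m → ℂ) * (RCLike.ofReal ∘ lam) := by
        funext i
        simp only [Pi.mul_apply, Function.comp_apply, hr]
        rw [← _root_.map_mul, ← _root_.map_mul, abs_mul_abs_self]
      rw [heq]
    have hCeq : C = QIC.PosSemidef.sqrt (Matrix.posSemidef_conjTranspose_mul_self X) :=
      Matrix.PosSemidef.eq_sqrt_of_sq_eq hCpsd _ hCsq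
    rw [traceNorm, ← hCeq, hSX, keytr, keytr, habs]

lemma trace_conj_psd (A : Matrix m m ℂ) {ρ : Matrix m m ℂ} (hρ : ρ.PosSemidef) :
    (A * ρ).trace = (hρ.sqrt * A * hρ.sqrt).trace := by
  rw [show A * ρ = A * hρ.sqrt * hρ.sqrt by rw [Matrix.mul_assoc, hρ.sqrt_mul_self],
    Matrix.trace_mul_cycle A hρ.sqrt hρ.sqrt]

lemma trace_sandwich (X : Matrix m m ℂ) {ρ : Matrix m m ℂ} (hρ : ρ.PosSemidef) :
    (hρ.sqrt * X * hρ.sqrt).trace = (X * ρ).trace := by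
  rw [Matrix.trace_mul_cycle hρ.sqrt X hρ.sqrt, hρ.sqrt_mul_self, Matrix.trace_mul_comm]

lemma abs_trace_right (A : Matrix m m ℂ) {ρ : Matrix m m ℂ} (hρ : ρ.PosSemidef) :
    ‖(A * ρ).trace‖ ≤
      Real.sqrt ((A * Aᴴ * ρ).trace.re) * Real.sqrt (ρ.trace.re) := by
  have hsH : hρ.sqrtᴴ = hρ.sqrt := hρ.posSemidef_sqrt.1
  have h := cs_trace (Aᴴ * hρ.sqrt) hρ.sqrt
  rw [Matrix.conjTranspose_mul, Matrix.conjTranspose_conjTranspose, hsH] at h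
  rw [trace_conj_psd A hρ]
  have hmid : (hρ.sqrt * A * (Aᴴ * hρ.sqrt)).trace = (A * Aᴴ * ρ).trace := by
    rw [show hρ.sqrt * A * (Aᴴ * hρ.sqrt) = hρ.sqrt * (A * Aᴴ) * hρ.sqrt by
      simp only [Matrix.mul_assoc]]
    exact trace_sandwich (A * Aᴴ) hρ
  rwa [hmid, hρ.sqrt_mul_self] at h

lemma abs_trace_left (A : Matrix m m ℂ) {ρ : Matrix m m ℂ} (hρ : ρ.PosSemidef) :
    ‖(A * ρ).trace‖ ≤
      Real.sqrt (ρ.trace.re) * Real.sqrt ((Aᴴ * A * ρ).trace.re) := by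
  have hsH : hρ.sqrtᴴ = hρ.sqrt := hρ.posSemidef_sqrt.1
  have h := cs_trace hρ.sqrt (A * hρ.sqrt)
  rw [Matrix.conjTranspose_mul, hsH] at h
  rw [trace_conj_psd A hρ]
  have hmid : (hρ.sqrt * Aᴴ * (A * hρ.sqrt)).trace = (Aᴴ * A * ρ).trace := by
    rw [show hρ.sqrt * Aᴴ * (A * hρ.sqrt) = hρ.sqrt * (Aᴴ * A) * hρ.sqrt by
      simp only [Matrix.mul_assoc]]
    exact trace_sandwich (Aᴴ * A) hρ
  have hfirst : (hρ.sqrt * hρ.sqrt).trace = ρ.trace := by rw [hρ.sqrt_mul_self]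
  rw [show hρ.sqrt * (A * hρ.sqrt) = hρ.sqrt * A * hρ.sqrt from (Matrix.mul_assoc _ _ _).symm,
    hfirst, hmid] at h
  exact h

lemma gentle_single {ρ Λ : Matrix m m ℂ} (hρ : IsDensity ρ)
    (hΛ₀ : Λ.PosSemidef) (hΛ₁ : loewnerLE Λ 1) :
    traceNorm (msqrt Λ * ρ * msqrt Λ - ρ)
      ≤ 2 * Real.sqrt ((((1 : Matrix m m ℂ) - Λ) * ρ).trace.re) := by
  obtain ⟨hρp, hρ1⟩ := hρ
  have hΛ1' : ((1 : Matrix m m ℂ) - Λ).PosSemidef := hΛ₁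
  have hmsq : msqrt Λ = hΛ₀.sqrt := dif_pos hΛ₀
  set B := hΛ₀.sqrt with hBdef
  have hBps : B.PosSemidef := hΛ₀.posSemidef_sqrt
  have hBH : Bᴴ = B := hBps.1
  have hBB : B * B = Λ := hΛ₀.sqrt_mul_self
  -- rewrite rules for associativity-normalized products
  have hBBx : ∀ Y : Matrix m m ℂ, B * (B * Y) = Λ * Y := fun Y => by
    rw [← Matrix.mul_assoc, hBB]
  set X : Matrix m m ℂ := B * ρ * B - ρ with hXdef
  have hXgoal : msqrt Λ * ρ * msqrt Λ - ρ = X := by rw [hmsq]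
  have hXh : X.IsHermitian := by
    have h1 : (B * ρ * B).PosSemidef := by
      have := hρp.mul_mul_conjTranspose_same B
      rwa [hBH] at this
    exact h1.1.sub hρp.1
  obtain ⟨S, hSH, hSS, htn⟩ := exists_sign X hXh
  have hSSx : ∀ Y : Matrix m m ℂ, S * (S * Y) = Y := fun Y => by
    rw [← Matrix.mul_assoc, hSS, Matrix.one_mul]
  -- decomposition of the trace
  set A₁ : Matrix m m ℂ := (B - 1) * (S * B) with hA₁
  set A₂ : Matrix m m ℂ := S * (B - 1) with hA₂
  have htr : (S * X).trace = (A₁ * ρ).trace + (A₂ * ρ).trace := by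
    have hdec : S * X = S * (B * ρ * (B - 1)) + A₂ * ρ := by
      rw [hA₂, hXdef]
      simp only [Matrix.mul_sub, Matrix.sub_mul, Matrix.mul_one, Matrix.one_mul,
        Matrix.mul_assoc]
      abel
    rw [hdec, Matrix.trace_add]
    congr 1
    rw [show S * (B * ρ * (B - 1)) = (S * (B * ρ)) * (B - 1) by
      simp only [Matrix.mul_assoc], Matrix.trace_mul_comm]
    rw [hA₁]
    simp only [Matrix.mul_assoc]
  -- the error quantity
  set δ : ℝ := (((1 : Matrix m m ℂ) - Λ) * ρ).trace.re with hδ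
  have hδ0 : 0 ≤ δ := trace_mul_re_nonneg hΛ1' hρp
  -- (B-1)ᴴ = B - 1 and (B-1)*(B-1) psd
  have hB1H : (B - 1)ᴴ = B - 1 := by
    rw [Matrix.conjTranspose_sub, hBH, Matrix.conjTranspose_one]
  have hM : ((B - 1) * (B - 1)).PosSemidef := by
    have := Matrix.posSemidef_conjTranspose_mul_self (B - 1)
    rwa [hB1H] at this
  -- (1 - Λ) - (B-1)(B-1) is psd
  have hkey : (((1 : Matrix m m ℂ) - Λ) - (B - 1) * (B - 1)).PosSemidef := by
    have h2 : ((1 : Matrix m m ℂ) - Λ) - (B - 1) * (B - 1) = (B - Λ) + (B - Λ) := by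
      rw [Matrix.sub_mul, Matrix.mul_sub, Matrix.mul_sub, Matrix.mul_one, Matrix.one_mul,
        Matrix.mul_one, hBB]
      abel
    rw [h2]
    exact (sqrt_sub_self_psd hΛ₀ hΛ1').add (sqrt_sub_self_psd hΛ₀ hΛ1')
  have hη : ((B - 1) * (B - 1) * ρ).trace.re ≤ δ := trace_mul_mono hkey hρp
  -- term 2 bound
  have hA₂AA : A₂ᴴ * A₂ = (B - 1) * (B - 1) := by
    rw [hA₂, Matrix.conjTranspose_mul, hSH, hB1H, Matrix.mul_assoc, hSSx]
  have hbound2 : ‖(A₂ * ρ).trace‖ ≤ Real.sqrt δ := by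
    have h := abs_trace_left A₂ hρp
    rw [hA₂AA, hρ1] at h
    simp only [Complex.one_re, Real.sqrt_one, one_mul] at h
    exact h.trans (Real.sqrt_le_sqrt hη)
  -- term 1 bound
  have hA1H : A₁ᴴ = B * (S * (B - 1)) := by
    rw [hA₁, Matrix.conjTranspose_mul, Matrix.conjTranspose_mul, hSH, hBH, hB1H,
      Matrix.mul_assoc]
  have hdiff : (B - 1) * (B - 1) - A₁ * A₁ᴴ
      = ((B - 1) * S) * ((1 : Matrix m m ℂ) - Λ) * ((B - 1) * S)ᴴ := by
    rw [hA1H, hA₁, Matrix.conjTranspose_mul, hSH, hB1H]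
    simp only [Matrix.mul_sub, Matrix.sub_mul, Matrix.mul_one, Matrix.one_mul,
      Matrix.mul_assoc, hSSx, hBBx, hSS, hBB]
    abel
  have hmono1 : (A₁ * A₁ᴴ * ρ).trace.re ≤ ((B - 1) * (B - 1) * ρ).trace.re := by
    refine trace_mul_mono ?_ hρp
    rw [hdiff]
    exact hΛ1'.mul_mul_conjTranspose_same ((B - 1) * S)
  have hbound1 : ‖(A₁ * ρ).trace‖ ≤ Real.sqrt δ := by
    have h := abs_trace_right A₁ hρp
    rw [hρ1] at h
    simp only [Complex.one_re, Real.sqrt_one, mul_one] at h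
    exact h.trans (Real.sqrt_le_sqrt (hmono1.trans hη))
  -- put everything together
  rw [hXgoal, htn]
  calc ((S * X).trace).re ≤ ‖(S * X).trace‖ := Complex.re_le_norm _
    _ ≤ ‖(A₁ * ρ).trace‖ + ‖(A₂ * ρ).trace‖ := by
        rw [htr]; exact norm_add_le _ _
    _ ≤ Real.sqrt δ + Real.sqrt δ := add_le_add hbound1 hbound2
    _ = 2 * Real.sqrt δ := by ring

end Helpers

/-- **Gentle Operator Lemma for ensembles.**
If `0 ≤ Λ ≤ I` succeeds with probability at least `1 − ε` on the expected state
`ρ = Σ_x p(x) ρ_x` of an ensemble, then the expected trace distance between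
`√Λ ρ_x √Λ` and `ρ_x` is at most `2√ε`. -/
theorem gentle_operator_lemma_for_ensembles
    {X : Type*} [Fintype X] {m : Type*} [Fintype m] [DecidableEq m]
    (p : X → ℝ) (hp : IsProbDist p)
    (ρ : X → Matrix m m ℂ) (hρ : ∀ x, IsDensity (ρ x))
    (Λ : Matrix m m ℂ) (hΛ₀ : Λ.PosSemidef) (hΛ₁ : loewnerLE Λ 1)
    (ε : ℝ) (hε : 0 ≤ ε)
    (hsucc : 1 - ε ≤ ((Λ * ∑ x, p x • ρ x).trace).re) :
    ∑ x, p x * traceNorm (msqrt Λ * ρ x * msqrt Λ - ρ x) ≤ 2 * Real.sqrt ε := by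
  classical
  obtain ⟨hp0, hp1⟩ := hp
  set δ : X → ℝ := fun x => (((1 : Matrix m m ℂ) - Λ) * ρ x).trace.re with hδdef
  have hδ0 : ∀ x, 0 ≤ δ x := fun x => trace_mul_re_nonneg hΛ₁ (hρ x).1
  -- sum of p x * δ x equals 1 - re tr(Λ ρ̄) ≤ ε
  have hsum : ∑ x, p x * δ x ≤ ε := by
    have hexp : ∀ x, δ x = 1 - ((Λ * ρ x).trace).re := by
      intro x
      rw [hδdef]
      simp only [Matrix.sub_mul, Matrix.one_mul, Matrix.trace_sub, Complex.sub_re, (hρ x).2]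
      simp
    have hbar : ((Λ * ∑ x, p x • ρ x).trace).re = ∑ x, p x * ((Λ * ρ x).trace).re := by
      rw [Finset.mul_sum, Matrix.trace_sum, Complex.re_sum]
      congr 1
      funext x
      rw [Matrix.mul_smul, Matrix.trace_smul]
      simp [Complex.real_smul]
    have : ∑ x, p x * δ x = 1 - ((Λ * ∑ x, p x • ρ x).trace).re := by
      rw [hbar]
      simp_rw [hexp]
      simp only [mul_sub, mul_one, Finset.sum_sub_distrib, hp1]
    linarith
  -- Cauchy-Schwarz on the sum
  have hcs : ∑ x, p x * Real.sqrt (δ x) ≤ Real.sqrt (∑ x, p x * δ x) := by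
    have h := Finset.sum_mul_sq_le_sq_mul_sq Finset.univ
      (fun x => Real.sqrt (p x)) (fun x => Real.sqrt (p x) * Real.sqrt (δ x))
    have he1 : ∀ x, Real.sqrt (p x) * (Real.sqrt (p x) * Real.sqrt (δ x))
        = p x * Real.sqrt (δ x) := by
      intro x
      rw [← mul_assoc, Real.mul_self_sqrt (hp0 x)]
    have he2 : ∀ x, Real.sqrt (p x) ^ 2 = p x := fun x => Real.sq_sqrt (hp0 x)
    have he3 : ∀ x, (Real.sqrt (p x) * Real.sqrt (δ x)) ^ 2 = p x * δ x := by
      intro x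
      rw [mul_pow, Real.sq_sqrt (hp0 x), Real.sq_sqrt (hδ0 x)]
    simp_rw [he1, he2, he3, hp1, one_mul] at h
    have hnn : 0 ≤ ∑ x, p x * Real.sqrt (δ x) :=
      Finset.sum_nonneg fun x _ => mul_nonneg (hp0 x) (Real.sqrt_nonneg _)
    exact (Real.le_sqrt hnn (Finset.sum_nonneg fun x _ => mul_nonneg (hp0 x) (hδ0 x))).mpr h
  calc ∑ x, p x * traceNorm (msqrt Λ * ρ x * msqrt Λ - ρ x)
      ≤ ∑ x, p x * (2 * Real.sqrt (δ x)) := by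
        refine Finset.sum_le_sum fun x _ => ?_
        exact mul_le_mul_of_nonneg_left (gentle_single (hρ x) hΛ₀ hΛ₁) (hp0 x)
    _ = 2 * ∑ x, p x * Real.sqrt (δ x) := by
        rw [Finset.mul_sum]; congr 1; funext x; ring
    _ ≤ 2 * Real.sqrt (∑ x, p x * δ x) := by linarith
    _ ≤ 2 * Real.sqrt ε := by
        have := Real.sqrt_le_sqrt hsum
        linarith

end QIC
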